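/- For every clique tree T of G_I, every subtree of the tree model defined by T has at most k+1 leaves; consequently, the vertex leafage of G_I is at most k+1. -/

import Mathlib

open SimpleGraph

/-- The degree of a vertex in a graph, via `Set.ncard`. -/
noncomputable def deg {W : Type*} (T : SimpleGraph W) (w : W) : ℕ :=
  (T.neighborSet w).ncard

/-- The set of leaves (degree-one vertices) of a graph. -/
def leaves {W : Type*} (T : SimpleGraph W) : Set W :=
  {w | deg T w = 1}

/-- The number of leaves. -/
noncomputable def numLeaves {W : Type*} (T : SimpleGraph W) : ℕ :=
  (leaves T).ncard

/-- The set of leaves of the subgraph of `T` induced by `s`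
(nodes of `s` with exactly one neighbour inside `s`). -/
def subLeaves {W : Type*} (T : SimpleGraph W) (s : Set W) : Set W :=
  {w | w ∈ s ∧ (T.neighborSet w ∩ s).ncard = 1}

/-- The number of leaves of the subtree induced by `s`. -/
noncomputable def numSubLeaves {W : Type*} (T : SimpleGraph W) (s : Set W) : ℕ :=
  (subLeaves T s).ncard

/-- A tree model of a graph `G`: a finite host tree `T` together with nonempty
subtrees `sub u` such that distinct vertices are adjacent in `G` iff their
subtrees intersect. -/
structure TreeModel {V : Type*} (G : SimpleGraph V) where
  W : Type
  finW : Finite W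
  T : SimpleGraph W
  tree : T.IsTree
  sub : V → Set W
  sub_nonempty : ∀ u, (sub u).Nonempty
  sub_conn : ∀ u, (T.induce (sub u)).Connected
  adj_iff : ∀ u v, u ≠ v → (G.Adj u v ↔ (sub u ∩ sub v).Nonempty)

/-- The leafage of a chordal graph: the minimum number of host-tree leaves over
all tree models. -/
noncomputable def leafage {V : Type*} (G : SimpleGraph V) : ℕ :=
  sInf {n | ∃ M : TreeModel G, numLeaves M.T = n}

/-- The vertex leafage of a chordal graph: the least `k` such that `G` has a tree
model all of whose subtrees have at most `k` leaves. -/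
noncomputable def vleafage {V : Type*} (G : SimpleGraph V) : ℕ :=
  sInf {k | ∃ M : TreeModel G, ∀ u, numSubLeaves M.T (M.sub u) ≤ k}

/-- A maximal clique of `G`. -/
def IsMaxClique {V : Type*} (G : SimpleGraph V) (C : Set V) : Prop :=
  G.IsClique C ∧ ∀ D, G.IsClique D → C ⊆ D → D = C

/-- The type of maximal cliques of `G`. -/
abbrev MaxCliques {V : Type*} (G : SimpleGraph V) := {C : Set V // IsMaxClique G C}

/-- A clique tree of `G`: a tree whose nodes are exactly the maximal cliques of `G`,
such that every node on the path between nodes `C` and `C'` contains `C ∩ C'`. -/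
structure CliqueTree {V : Type*} (G : SimpleGraph V) where
  T : SimpleGraph (MaxCliques G)
  tree : T.IsTree
  path_cond : ∀ (C C' : MaxCliques G) (p : T.Walk C C'), p.IsPath →
    ∀ C'' ∈ p.support, C.1 ∩ C'.1 ⊆ C''.1

/-- The subtree (node set) assigned to a vertex `u` in the tree model defined by a
clique tree of `G`: the set of maximal cliques containing `u`. -/
def cliqueSub {V : Type*} (G : SimpleGraph V) (u : V) : Set (MaxCliques G) :=
  {C | u ∈ C.1}

/-- The set of nodes of degree at least 3. -/
def Hh {W : Type*} (T : SimpleGraph W) : Set W := {w | 3 ≤ deg T w}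

/-- The set of edges incident to a node of degree at least 3. -/
def Ee {W : Type*} (T : SimpleGraph W) : Set (Sym2 W) :=
  {e | e ∈ T.edgeSet ∧ ∃ w ∈ e, w ∈ Hh T}

/-- The vertex set of the graph `G_I`: variable vertices `v i`, clause vertices `y j`,
and two extra vertices `z 0`, `z 1`. -/
inductive GV (n m : ℕ) where
  | v : Fin n → GV n m
  | y : Fin m → GV n m
  | z : Fin 2 → GV n m
deriving DecidableEq

instance (n m : ℕ) : Finite (GV n m) :=
  Finite.of_surjective
    (fun x : (Fin n ⊕ Fin m ⊕ Fin 2) => match x with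
      | Sum.inl i => GV.v i
      | Sum.inr (Sum.inl j) => GV.y j
      | Sum.inr (Sum.inr t) => GV.z t)
    (by
      intro g
      cases g with
      | v i => exact ⟨Sum.inl i, rfl⟩
      | y j => exact ⟨Sum.inr (Sum.inl j), rfl⟩
      | z t => exact ⟨Sum.inr (Sum.inr t), rfl⟩)

/-- The split graph `G_I` of the reduction: `{y j}` is a clique, `{v i} ∪ {z t}` is an
independent set, `v i` is adjacent to `y j` iff `i ∈ C j`, and each `z t` is adjacent to
every `y j`. -/
def GI (n m : ℕ) (C : Fin m → Finset (Fin n)) : SimpleGraph (GV n m) :=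
  SimpleGraph.fromRel (fun a b =>
    match a, b with
    | GV.y _, GV.y _ => True
    | GV.v i, GV.y j => i ∈ C j
    | GV.z _, GV.y _ => True
    | _, _ => False)

/-- The maximal clique `A = {z_1, y_1, …, y_m}`. -/
def setA (n m : ℕ) : Set (GV n m) := {GV.z 0} ∪ {x | ∃ j, x = GV.y j}

/-- The maximal clique `B = {z_2, y_1, …, y_m}`. -/
def setB (n m : ℕ) : Set (GV n m) := {GV.z 1} ∪ {x | ∃ j, x = GV.y j}

/-- The maximal clique `Q_i = {v_i} ∪ {y_j : v_i ∈ C_j}`. -/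
def setQ (n m : ℕ) (C : Fin m → Finset (Fin n)) (i : Fin n) : Set (GV n m) :=
  {GV.v i} ∪ {x | ∃ j, x = GV.y j ∧ i ∈ C j}

section Test
variable {n m : ℕ} {C : Fin m → Finset (Fin n)}

lemma adj_vy (i : Fin n) (j : Fin m) : (GI n m C).Adj (GV.v i) (GV.y j) ↔ i ∈ C j := by
  simp [GI, SimpleGraph.fromRel_adj]

lemma adj_zy (t : Fin 2) (j : Fin m) : (GI n m C).Adj (GV.z t) (GV.y j) := by
  simp [GI, SimpleGraph.fromRel_adj]

lemma adj_yy {j j' : Fin m} (h : j ≠ j') : (GI n m C).Adj (GV.y j) (GV.y j') := by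
  simp [GI, SimpleGraph.fromRel_adj, h]

lemma adj_v {i : Fin n} {x : GV n m} (h : (GI n m C).Adj (GV.v i) x) :
    ∃ j, x = GV.y j ∧ i ∈ C j := by
  cases x with
  | y j => exact ⟨j, rfl, (adj_vy i j).mp h⟩
  | v i' => simp [GI, SimpleGraph.fromRel_adj] at h
  | z t => simp [GI, SimpleGraph.fromRel_adj] at h

lemma adj_z {t : Fin 2} {x : GV n m} (h : (GI n m C).Adj (GV.z t) x) :
    ∃ j, x = GV.y j := by
  cases x with
  | y j => exact ⟨j, rfl⟩
  | v i' => simp [GI, SimpleGraph.fromRel_adj] at h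
  | z t' => simp [GI, SimpleGraph.fromRel_adj] at h

end Test
section Test2
variable {n m : ℕ} {C : Fin m → Finset (Fin n)}

lemma mem_setA {x : GV n m} : x ∈ setA n m ↔ x = GV.z 0 ∨ ∃ j, x = GV.y j := Iff.rfl
lemma mem_setB {x : GV n m} : x ∈ setB n m ↔ x = GV.z 1 ∨ ∃ j, x = GV.y j := Iff.rfl
lemma mem_setQ {x : GV n m} {i : Fin n} :
    x ∈ setQ n m C i ↔ x = GV.v i ∨ ∃ j, x = GV.y j ∧ i ∈ C j := Iff.rfl

lemma cliqueA : (GI n m C).IsClique (setA n m) := by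
  rintro x (rfl | ⟨j, rfl⟩) y (rfl | ⟨j', rfl⟩) hxy
  · exact absurd rfl hxy
  · exact adj_zy 0 j'
  · exact (adj_zy 0 j).symm
  · exact adj_yy (by rintro rfl; exact hxy rfl)

lemma cliqueB : (GI n m C).IsClique (setB n m) := by
  rintro x (rfl | ⟨j, rfl⟩) y (rfl | ⟨j', rfl⟩) hxy
  · exact absurd rfl hxy
  · exact adj_zy 1 j'
  · exact (adj_zy 1 j).symm
  · exact adj_yy (by rintro rfl; exact hxy rfl)

lemma cliqueQ (i : Fin n) : (GI n m C).IsClique (setQ n m C i) := by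
  rintro x (rfl | ⟨j, rfl, hj⟩) y (rfl | ⟨j', rfl, hj'⟩) hxy
  · exact absurd rfl hxy
  · exact (adj_vy i j').mpr hj'
  · exact ((adj_vy i j).mpr hj).symm
  · exact adj_yy (by rintro rfl; exact hxy rfl)

lemma maxA : IsMaxClique (GI n m C) (setA n m) := by
  refine ⟨cliqueA, fun E hE hsub => ?_⟩
  apply Set.Subset.antisymm _ hsub
  intro x hx
  by_cases hx0 : x = GV.z 0
  · exact Or.inl hx0
  · obtain ⟨j, rfl⟩ := adj_z ((hE (hsub (Or.inl rfl)) hx (Ne.symm hx0)))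
    exact Or.inr ⟨j, rfl⟩

lemma maxB : IsMaxClique (GI n m C) (setB n m) := by
  refine ⟨cliqueB, fun E hE hsub => ?_⟩
  apply Set.Subset.antisymm _ hsub
  intro x hx
  by_cases hx0 : x = GV.z 1
  · exact Or.inl hx0
  · obtain ⟨j, rfl⟩ := adj_z ((hE (hsub (Or.inl rfl)) hx (Ne.symm hx0)))
    exact Or.inr ⟨j, rfl⟩

lemma maxQ (i : Fin n) : IsMaxClique (GI n m C) (setQ n m C i) := by
  refine ⟨cliqueQ i, fun E hE hsub => ?_⟩
  apply Set.Subset.antisymm _ hsub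
  intro x hx
  by_cases hx0 : x = GV.v i
  · exact Or.inl hx0
  · obtain ⟨j, rfl, hj⟩ := adj_v ((hE (hsub (Or.inl rfl)) hx (Ne.symm hx0)))
    exact Or.inr ⟨j, rfl, hj⟩

lemma eq_setQ_of_mem {D : Set (GV n m)} (hD : IsMaxClique (GI n m C) D) {i : Fin n}
    (hi : GV.v i ∈ D) : D = setQ n m C i := by
  have hsub : D ⊆ setQ n m C i := by
    intro x hx
    by_cases hx0 : x = GV.v i
    · exact Or.inl hx0
    · obtain ⟨j, rfl, hj⟩ := adj_v (hD.1 hi hx (Ne.symm hx0))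
      exact Or.inr ⟨j, rfl, hj⟩
  exact Set.Subset.antisymm hsub (hD.2 _ (cliqueQ i) hsub ▸ Set.Subset.refl _)

lemma eq_setA_of_mem {D : Set (GV n m)} (hD : IsMaxClique (GI n m C) D)
    (hz : GV.z 0 ∈ D) : D = setA n m := by
  have hsub : D ⊆ setA n m := by
    intro x hx
    by_cases hx0 : x = GV.z 0
    · exact Or.inl hx0
    · obtain ⟨j, rfl⟩ := adj_z (hD.1 hz hx (Ne.symm hx0))
      exact Or.inr ⟨j, rfl⟩
  exact Set.Subset.antisymm hsub (hD.2 _ cliqueA hsub ▸ Set.Subset.refl _)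

lemma eq_setB_of_mem {D : Set (GV n m)} (hD : IsMaxClique (GI n m C) D)
    (hz : GV.z 1 ∈ D) : D = setB n m := by
  have hsub : D ⊆ setB n m := by
    intro x hx
    by_cases hx0 : x = GV.z 1
    · exact Or.inl hx0
    · obtain ⟨j, rfl⟩ := adj_z (hD.1 hz hx (Ne.symm hx0))
      exact Or.inr ⟨j, rfl⟩
  exact Set.Subset.antisymm hsub (hD.2 _ cliqueB hsub ▸ Set.Subset.refl _)

lemma eq_setA_of_sub_y {D : Set (GV n m)} (hD : IsMaxClique (GI n m C) D)
    (h : ∀ x ∈ D, ∃ j, x = GV.y j) : D = setA n m := by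
  have hsub : D ⊆ setA n m := fun x hx => Or.inr (h x hx)
  exact Set.Subset.antisymm hsub (hD.2 _ cliqueA hsub ▸ Set.Subset.refl _)

lemma maxclique_cases {D : Set (GV n m)} (hD : IsMaxClique (GI n m C) D) :
    D = setA n m ∨ D = setB n m ∨ ∃ i, D = setQ n m C i := by
  by_cases hv : ∃ i, GV.v i ∈ D
  · exact Or.inr (Or.inr ⟨hv.choose, eq_setQ_of_mem hD hv.choose_spec⟩)
  by_cases hz0 : GV.z 0 ∈ D
  · exact Or.inl (eq_setA_of_mem hD hz0)
  by_cases hz1 : GV.z 1 ∈ D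
  · exact Or.inr (Or.inl (eq_setB_of_mem hD hz1))
  refine Or.inl (eq_setA_of_sub_y hD fun x hx => ?_)
  cases x with
  | y j => exact ⟨j, rfl⟩
  | v i => exact absurd ⟨i, hx⟩ hv
  | z t =>
      fin_cases t
      · exact absurd hx hz0
      · exact absurd hx hz1

end Test2
section Test3
variable {n m : ℕ} {C : Fin m → Finset (Fin n)}

example : Finite (Set (GV n m)) := inferInstance

lemma setA_ne_setB : setA n m ≠ setB n m := by
  intro h
  have : GV.z 0 ∈ setB n m := h ▸ Or.inl rfl
  rcases this with h' | ⟨j, h'⟩ <;> simp at h'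

lemma z0_not_mem_setQ {i : Fin n} : GV.z 0 ∉ setQ n m C i := by
  rintro (h | ⟨j, h, -⟩) <;> simp at h

lemma z1_not_mem_setQ {i : Fin n} : GV.z 1 ∉ setQ n m C i := by
  rintro (h | ⟨j, h, -⟩) <;> simp at h

lemma setA_ne_setQ {i : Fin n} : setA n m ≠ setQ n m C i := by
  intro h
  have : GV.z 0 ∈ setQ n m C i := h ▸ (Or.inl rfl : GV.z 0 ∈ setA n m)
  exact z0_not_mem_setQ this

lemma setB_ne_setQ {i : Fin n} : setB n m ≠ setQ n m C i := by
  intro h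
  have : GV.z 1 ∈ setQ n m C i := h ▸ (Or.inl rfl : GV.z 1 ∈ setB n m)
  exact z1_not_mem_setQ this

lemma setQ_inj {i i' : Fin n} (h : setQ n m C i = setQ n m C i') : i = i' := by
  have : GV.v i ∈ setQ n m C i' := h ▸ Or.inl rfl
  rcases this with h' | ⟨j, h', -⟩
  · exact GV.v.inj h'
  · simp at h'

lemma y_mem_setA {j : Fin m} : GV.y j ∈ setA n m := Or.inr ⟨j, rfl⟩
lemma y_mem_setB {j : Fin m} : GV.y j ∈ setB n m := Or.inr ⟨j, rfl⟩
lemma y_mem_setQ {j : Fin m} {i : Fin n} : GV.y j ∈ setQ n m C i ↔ i ∈ C j := by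
  constructor
  · rintro (h | ⟨j', h, hj'⟩)
    · simp at h
    · cases GV.y.inj h; exact hj'
  · exact fun h => Or.inr ⟨j, rfl, h⟩

variable (C) in
noncomputable def MA : MaxCliques (GI n m C) := ⟨setA n m, maxA⟩
variable (C) in
noncomputable def MB : MaxCliques (GI n m C) := ⟨setB n m, maxB⟩
variable (C) in
noncomputable def MQ (i : Fin n) : MaxCliques (GI n m C) := ⟨setQ n m C i, maxQ i⟩

lemma cliqueSub_v (i : Fin n) : cliqueSub (GI n m C) (GV.v i) = {MQ C i} := by
  ext D
  constructor
  · intro hD; exact Subtype.ext (eq_setQ_of_mem D.2 hD)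
  · rintro rfl; exact Or.inl rfl

lemma cliqueSub_z0 : cliqueSub (GI n m C) (GV.z 0) = {MA C} := by
  ext D
  constructor
  · intro hD; exact Subtype.ext (eq_setA_of_mem D.2 hD)
  · rintro rfl; exact Or.inl rfl

lemma cliqueSub_z1 : cliqueSub (GI n m C) (GV.z 1) = {MB C} := by
  ext D
  constructor
  · intro hD; exact Subtype.ext (eq_setB_of_mem D.2 hD)
  · rintro rfl; exact Or.inl rfl

lemma cliqueSub_y (j : Fin m) :
    cliqueSub (GI n m C) (GV.y j)
      = insert (MA C) (insert (MB C) (MQ C '' {i | i ∈ C j})) := by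
  ext D
  constructor
  · intro hD
    rcases maxclique_cases D.2 with h | h | ⟨i, h⟩
    · exact Or.inl (Subtype.ext h)
    · exact Or.inr (Or.inl (Subtype.ext h))
    · refine Or.inr (Or.inr ⟨i, ?_, (Subtype.ext h).symm⟩)
      have : GV.y j ∈ setQ n m C i := h ▸ hD
      exact y_mem_setQ.mp this
  · rintro (rfl | rfl | ⟨i, hi, rfl⟩)
    · exact y_mem_setA
    · exact y_mem_setB
    · exact y_mem_setQ.mpr hi

end Test3
section Test4

lemma two_le_ncard' {W : Type*} [Finite W] {s : Set W} {x y : W}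
    (hx : x ∈ s) (hy : y ∈ s) (hxy : x ≠ y) : 2 ≤ s.ncard :=
  (Set.one_lt_ncard_iff s.toFinite).mpr ⟨x, y, hx, hy, hxy⟩

lemma cons_cons_mid {W : Type*} [Finite W] {T : SimpleGraph W} {s : Set W} {a w w2 v : W}
    (h : T.Adj a w) (h' : T.Adj w w2) (q : T.Walk w2 v)
    (hp : (SimpleGraph.Walk.cons h (SimpleGraph.Walk.cons h' q)).IsPath)
    (hsup : ∀ x ∈ (SimpleGraph.Walk.cons h (SimpleGraph.Walk.cons h' q)).support, x ∈ s) :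
    ∃ u ∈ s, 2 ≤ (T.neighborSet u ∩ s).ncard := by
  have hmem : w2 ∈ (SimpleGraph.Walk.cons h' q).support := by
    simp [q.start_mem_support]
  have hws : w ∈ s := hsup w (by simp)
  have has : a ∈ s := hsup a (by simp)
  have hw2 : w2 ∈ s := by
    apply hsup w2
    simp only [SimpleGraph.Walk.support_cons, List.mem_cons]
    right
    simpa using hmem
  have hne : a ≠ w2 := by
    rw [SimpleGraph.Walk.cons_isPath_iff] at hp
    intro e
    exact hp.2 (e ▸ hmem)
  exact ⟨w, hws, two_le_ncard' ⟨h.symm, has⟩ ⟨h', hw2⟩ hne⟩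

lemma path_step {W : Type*} [Finite W] {T : SimpleGraph W} {s : Set W}
    (hpaths : ∀ x y : W, x ∈ s → y ∈ s →
      ∃ p : T.Walk x y, p.IsPath ∧ ∀ w ∈ p.support, w ∈ s)
    {x y : W} (hx : x ∈ s) (hy : y ∈ s) (hxy : x ≠ y) :
    T.Adj x y ∨ ∃ u ∈ s, 2 ≤ (T.neighborSet u ∩ s).ncard := by
  obtain ⟨p, hp, hsup⟩ := hpaths x y hx hy
  cases p with
  | nil => exact absurd rfl hxy
  | @cons _ w _ h q =>
    cases q with
    | nil => exact Or.inl h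
    | @cons _ w2 _ h' q' => exact Or.inr (cons_cons_mid h h' q' hp hsup)

lemma exists_two_nbrs {W : Type*} [Finite W] (T : SimpleGraph W) (s : Set W)
    (hpaths : ∀ x y : W, x ∈ s → y ∈ s →
      ∃ p : T.Walk x y, p.IsPath ∧ ∀ w ∈ p.support, w ∈ s)
    {a b c : W} (ha : a ∈ s) (hb : b ∈ s) (hc : c ∈ s)
    (hab : a ≠ b) (hac : a ≠ c) (hbc : b ≠ c) :
    ∃ w ∈ s, 2 ≤ (T.neighborSet w ∩ s).ncard := by
  rcases path_step hpaths ha hb hab with hadj1 | hdone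
  · rcases path_step hpaths ha hc hac with hadj2 | hdone
    · exact ⟨a, ha, two_le_ncard' ⟨hadj1, hb⟩ ⟨hadj2, hc⟩ hbc⟩
    · exact hdone
  · exact hdone

end Test4
section Test5
variable {n m : ℕ} {C : Fin m → Finset (Fin n)}

lemma subLeaves_subset {W : Type*} (T : SimpleGraph W) (s : Set W) :
    subLeaves T s ⊆ s := fun _ hw => hw.1

lemma numSubLeaves_le {W : Type*} [Finite W] (T : SimpleGraph W) (s : Set W) :
    numSubLeaves T s ≤ s.ncard :=
  Set.ncard_le_ncard (subLeaves_subset T s) s.toFinite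

lemma MA_ne_MB : MA C ≠ MB C := fun h => setA_ne_setB (congrArg Subtype.val h)
lemma MA_ne_MQ {i : Fin n} : MA C ≠ MQ C i := fun h => setA_ne_setQ (congrArg Subtype.val h)
lemma MB_ne_MQ {i : Fin n} : MB C ≠ MQ C i := fun h => setB_ne_setQ (congrArg Subtype.val h)

lemma part1 {k : ℕ} (hk : 3 ≤ k) (hC : ∀ j, (C j).card = k)
    (CT : CliqueTree (GI n m C)) (u : GV n m) :
    numSubLeaves CT.T (cliqueSub (GI n m C) u) ≤ k + 1 := by
  classical
  have hsingle : ∀ (D : MaxCliques (GI n m C)),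
      numSubLeaves CT.T {D} ≤ k + 1 := by
    intro D
    have := numSubLeaves_le CT.T ({D} : Set (MaxCliques (GI n m C)))
    rw [Set.ncard_singleton] at this
    omega
  cases u with
  | v i => rw [cliqueSub_v]; exact hsingle _
  | z t =>
      have h01 : t = 0 ∨ t = 1 := by fin_cases t <;> simp
      rcases h01 with rfl | rfl
      · rw [cliqueSub_z0]; exact hsingle _
      · rw [cliqueSub_z1]; exact hsingle _
  | y j =>
    set s := cliqueSub (GI n m C) (GV.y j) with hs
    have hpaths : ∀ x y : MaxCliques (GI n m C), x ∈ s → y ∈ s →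
        ∃ p : CT.T.Walk x y, p.IsPath ∧ ∀ w ∈ p.support, w ∈ s := by
      intro x y hx hy
      obtain ⟨wk⟩ := CT.tree.isConnected.preconnected x y
      refine ⟨wk.toPath.1, wk.toPath.2, fun D hD => ?_⟩
      exact CT.path_cond x y wk.toPath.1 wk.toPath.2 D hD ⟨hx, hy⟩
    obtain ⟨i0, hi0⟩ : (C j).Nonempty := Finset.card_pos.mp (by rw [hC]; omega)
    have haS : MA C ∈ s := y_mem_setA
    have hbS : MB C ∈ s := y_mem_setB
    have hcS : MQ C i0 ∈ s := y_mem_setQ.mpr hi0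
    obtain ⟨w, hw, h2⟩ :=
      exists_two_nbrs CT.T s hpaths haS hbS hcS MA_ne_MB MA_ne_MQ MB_ne_MQ
    have hss : subLeaves CT.T s ⊂ s := by
      refine ⟨subLeaves_subset _ _, fun hsub => ?_⟩
      have hw' := hsub hw
      have : (CT.T.neighborSet w ∩ s).ncard = 1 := hw'.2
      omega
    have hlt : numSubLeaves CT.T s < s.ncard := Set.ncard_lt_ncard hss s.toFinite
    have hcard : s.ncard ≤ k + 2 := by
      rw [hs, cliqueSub_y]
      have h1 : (MQ C '' {i | i ∈ C j}).ncard ≤ k := by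
        have := Set.ncard_image_le (f := MQ C) (s := {i | i ∈ C j}) (Set.toFinite _)
        have he : ({i | i ∈ C j} : Set (Fin n)).ncard = k := by
          rw [show ({i | i ∈ C j} : Set (Fin n)) = ↑(C j) from (Finset.setOf_mem).symm ▸ rfl,
            Set.ncard_coe_finset, hC]
        omega
      have h2' := Set.ncard_insert_le (MB C) (MQ C '' {i | i ∈ C j})
      have h3' := Set.ncard_insert_le (MA C) (insert (MB C) (MQ C '' {i | i ∈ C j}))
      omega
    omega

end Test5
section Test6

/-- The star graph on `Option β` with center `none`. -/
def StarG (β : Type) : SimpleGraph (Option β) :=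
  SimpleGraph.fromRel (fun x _ => x = none)

lemma starG_adj {β : Type} {x y : Option β} :
    (StarG β).Adj x y ↔ x ≠ y ∧ (x = none ∨ y = none) := by
  simp [StarG, SimpleGraph.fromRel_adj]

lemma starG_adj_none {β : Type} {y : Option β} (h : y ≠ none) :
    (StarG β).Adj none y := starG_adj.mpr ⟨Ne.symm h, Or.inl rfl⟩

lemma starG_connected (β : Type) : (StarG β).Connected := by
  rw [SimpleGraph.connected_iff]
  refine ⟨fun x y => ?_, ⟨none⟩⟩
  have key : ∀ z : Option β, (StarG β).Reachable none z := by
    intro z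
    by_cases hz : z = none
    · subst hz; exact SimpleGraph.Reachable.refl _
    · exact (starG_adj_none hz).reachable
  exact ((key x).symm.trans (key y))

lemma starG_isolated {β : Type} {b : Option β} (hb : b ≠ none) (x : Option β) :
    ¬((StarG β) \ SimpleGraph.fromEdgeSet {s(none, b)}).Adj b x := by
  intro hx
  rw [SimpleGraph.sdiff_adj] at hx
  obtain ⟨h1, h2⟩ := hx
  rw [starG_adj] at h1
  have hxn : x = none := h1.2.resolve_left hb
  subst hxn
  apply h2
  rw [SimpleGraph.fromEdgeSet_adj]
  exact ⟨by rw [Sym2.eq_swap]; rfl, h1.1⟩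

lemma no_reach_of_isolated {W : Type} {G : SimpleGraph W} {b c : W}
    (hb : ∀ x, ¬G.Adj b x) (h : G.Reachable b c) : b = c := by
  obtain ⟨p⟩ := h
  cases p with
  | nil => rfl
  | cons h q => exact absurd h (hb _)

lemma starG_isTree (β : Type) : (StarG β).IsTree := by
  refine ⟨starG_connected β, ?_⟩
  rw [SimpleGraph.isAcyclic_iff_forall_adj_isBridge]
  intro v w hvw
  rw [SimpleGraph.isBridge_iff]
  intro hreach
  rcases starG_adj.mp hvw with ⟨hne, hv | hw⟩
  · subst hv
    have hwn : w ≠ none := Ne.symm hne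
    exact hne (no_reach_of_isolated (starG_isolated hwn) hreach.symm).symm
  · subst hw
    have hvn : v ≠ none := hne
    have : ((StarG β) \ SimpleGraph.fromEdgeSet {s(none, v)}).Reachable v none := by
      have he : s(v, (none : Option β)) = s(none, v) := Sym2.eq_swap
      rwa [he] at hreach
    exact hvn (no_reach_of_isolated (starG_isolated hvn) this)

end Test6
section Test7
variable {n m : ℕ} {C : Fin m → Finset (Fin n)}

lemma not_adj_vv (i i' : Fin n) : ¬(GI n m C).Adj (GV.v i) (GV.v i') := by
  intro h; obtain ⟨j, hj, -⟩ := adj_v h; simp at hj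

lemma not_adj_vz (i : Fin n) (t : Fin 2) : ¬(GI n m C).Adj (GV.v i) (GV.z t) := by
  intro h; obtain ⟨j, hj, -⟩ := adj_v h; simp at hj

lemma not_adj_zz (t t' : Fin 2) : ¬(GI n m C).Adj (GV.z t) (GV.z t') := by
  intro h; obtain ⟨j, hj⟩ := adj_z h; simp at hj

/-- The subtrees for the star model. -/
def starSub (n m : ℕ) (C : Fin m → Finset (Fin n)) : GV n m → Set (Option (Option (Fin n)))
  | GV.v i => {some (some i)}
  | GV.y j => insert none (insert (some none) ((fun i => some (some i)) '' ↑(C j)))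
  | GV.z t => if t = 0 then {none} else {some none}

lemma induce_singleton_connected {W : Type} (T : SimpleGraph W) (x : W) :
    (T.induce {x}).Connected := by
  rw [SimpleGraph.connected_iff]
  refine ⟨fun a b => ?_, ⟨⟨x, rfl⟩⟩⟩
  have : a = b := Subtype.ext (by rw [a.2, b.2] : a.1 = b.1)
  rw [this]

lemma induce_star_connected {β : Type} (s : Set (Option β)) (h0 : none ∈ s) :
    ((StarG β).induce s).Connected := by
  rw [SimpleGraph.connected_iff]
  refine ⟨fun a b => ?_, ⟨⟨none, h0⟩⟩⟩
  have key : ∀ x : s, ((StarG β).induce s).Reachable x ⟨none, h0⟩ := by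
    intro x
    by_cases hx : x.1 = none
    · have hx' : x = (⟨none, h0⟩ : s) := Subtype.ext hx
      rw [hx']
    · have hadj : ((StarG β).induce s).Adj x ⟨none, h0⟩ :=
        starG_adj.mpr ⟨hx, Or.inr rfl⟩
      exact hadj.reachable
  exact (key a).trans (key b).symm

/-- The star tree model of `G_I`. -/
noncomputable def starModel (n m : ℕ) (C : Fin m → Finset (Fin n)) :
    TreeModel (GI n m C) where
  W := Option (Option (Fin n))
  finW := inferInstance
  T := StarG (Option (Fin n))
  tree := starG_isTree _
  sub := starSub n m C
  sub_nonempty := by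
    intro u
    cases u with
    | v i => exact ⟨some (some i), rfl⟩
    | y j => exact ⟨none, Or.inl rfl⟩
    | z t =>
        by_cases ht : t = 0
        · exact ⟨none, by simp [starSub, ht]⟩
        · exact ⟨some none, by simp [starSub, ht]⟩
  sub_conn := by
    intro u
    cases u with
    | v i => exact induce_singleton_connected _ _
    | y j => exact induce_star_connected _ (Or.inl rfl)
    | z t =>
        simp only [starSub]
        by_cases ht : t = 0
        · rw [if_pos ht]; exact induce_singleton_connected _ _
        · rw [if_neg ht]; exact induce_singleton_connected _ _
  adj_iff := by
    intro u v huv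
    cases u with
    | v i =>
      cases v with
      | v i' =>
        simp only [starSub]
        constructor
        · intro h; exact absurd h (not_adj_vv i i')
        · rintro ⟨x, hx1, hx2⟩
          rw [Set.mem_singleton_iff] at hx1 hx2
          have hii : some (some i) = some (some i') := hx1.symm.trans hx2
          have : i = i' := by simpa using hii
          exact absurd (by rw [this]) huv
      | y j =>
        simp only [starSub]
        constructor
        · intro h
          refine ⟨some (some i), rfl, ?_⟩
          right; right
          exact ⟨i, by simpa using (adj_vy i j).mp h, rfl⟩
        · rintro ⟨x, hx1, hx2⟩
          rw [Set.mem_singleton_iff] at hx1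
          subst hx1
          rcases hx2 with h | h | ⟨i', hi', h⟩
          · simp at h
          · simp at h
          · have hii : i' = i := by simpa using h
            exact (adj_vy i j).mpr (by simpa using hii ▸ hi')
      | z t =>
        simp only [starSub]
        constructor
        · intro h; exact absurd h (not_adj_vz i t)
        · rintro ⟨x, hx1, hx2⟩
          rw [Set.mem_singleton_iff] at hx1
          subst hx1
          by_cases ht : t = 0 <;> simp [ht] at hx2
    | y j =>
      cases v with
      | v i =>
        rw [SimpleGraph.adj_comm, Set.inter_comm]
        simp only [starSub]
        constructor
        · intro h
          refine ⟨some (some i), rfl, ?_⟩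
          right; right
          exact ⟨i, by simpa using (adj_vy i j).mp h, rfl⟩
        · rintro ⟨x, hx1, hx2⟩
          rw [Set.mem_singleton_iff] at hx1
          subst hx1
          rcases hx2 with h | h | ⟨i', hi', h⟩
          · simp at h
          · simp at h
          · have hii : i' = i := by simpa using h
            exact (adj_vy i j).mpr (by simpa using hii ▸ hi')
      | y j' =>
        simp only [starSub]
        constructor
        · intro _; exact ⟨none, Or.inl rfl, Or.inl rfl⟩
        · intro _
          exact adj_yy (by rintro rfl; exact huv rfl)
      | z t =>
        simp only [starSub]
        constructor
        · intro _
          by_cases ht : t = 0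
          · exact ⟨none, Or.inl rfl, by simp [ht]⟩
          · exact ⟨some none, Or.inr (Or.inl rfl), by simp [ht]⟩
        · intro _
          exact (adj_zy t j).symm
    | z t =>
      cases v with
      | v i =>
        simp only [starSub]
        constructor
        · intro h; exact absurd h.symm (not_adj_vz i t)
        · rintro ⟨x, hx1, hx2⟩
          rw [Set.mem_singleton_iff] at hx2
          subst hx2
          by_cases ht : t = 0 <;> simp [ht] at hx1
      | y j =>
        simp only [starSub]
        constructor
        · intro _
          by_cases ht : t = 0
          · exact ⟨none, by simp [ht], Or.inl rfl⟩
          · exact ⟨some none, by simp [ht], Or.inr (Or.inl rfl)⟩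
        · intro _
          exact adj_zy t j
      | z t' =>
        simp only [starSub]
        constructor
        · intro h; exact absurd h (not_adj_zz t t')
        · rintro ⟨x, hx1, hx2⟩
          have htt : t ≠ t' := by rintro rfl; exact huv rfl
          fin_cases t <;> fin_cases t' <;> simp_all

end Test7
section Test8
variable {n m : ℕ} {C : Fin m → Finset (Fin n)}

lemma starModel_leaves {k : ℕ} (hk : 3 ≤ k) (hC : ∀ j, (C j).card = k) (u : GV n m) :
    numSubLeaves (starModel n m C).T ((starModel n m C).sub u) ≤ k + 1 := by
  classical
  have hsingle : ∀ x : Option (Option (Fin n)),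
      numSubLeaves (StarG (Option (Fin n))) {x} ≤ k + 1 := by
    intro x
    have := numSubLeaves_le (StarG (Option (Fin n))) {x}
    rw [Set.ncard_singleton] at this
    omega
  show numSubLeaves (StarG (Option (Fin n))) (starSub n m C u) ≤ k + 1
  cases u with
  | v i => exact hsingle _
  | z t =>
      simp only [starSub]
      by_cases ht : t = 0
      · rw [if_pos ht]; exact hsingle _
      · rw [if_neg ht]; exact hsingle _
  | y j =>
    simp only [starSub]
    set s : Set (Option (Option (Fin n))) :=
      insert none (insert (some none) ((fun i => some (some i)) '' ↑(C j))) with hsdef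
    obtain ⟨i0, hi0⟩ : (C j).Nonempty := Finset.card_pos.mp (by rw [hC]; omega)
    have h2 : 2 ≤ ((StarG (Option (Fin n))).neighborSet none ∩ s).ncard := by
      refine two_le_ncard' (x := some none) (y := some (some i0))
        ⟨starG_adj_none (by simp), Or.inr (Or.inl rfl)⟩
        ⟨starG_adj_none (by simp), Or.inr (Or.inr ⟨i0, by simpa using hi0, rfl⟩)⟩
        (by simp)
    have hsub : subLeaves (StarG (Option (Fin n))) s ⊆
        insert (some none) ((fun i => some (some i)) '' ↑(C j)) := by
      intro w hw
      obtain ⟨hws, hw1⟩ := hw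
      rcases hws with h | h
      · exfalso; rw [h] at hw1; omega
      · exact h
    have hcard : (insert (some none) ((fun i => some (some i)) '' ↑(C j)) :
        Set (Option (Option (Fin n)))).ncard ≤ k + 1 := by
      have h1 : ((fun i => some (some i)) '' (↑(C j) : Set (Fin n))).ncard ≤ k := by
        have := Set.ncard_image_le (f := fun i : Fin n => some (some i))
          (s := (↑(C j) : Set (Fin n))) (Set.toFinite _)
        rw [Set.ncard_coe_finset, hC] at this
        exact this
      have := Set.ncard_insert_le (some (none : Option (Fin n)))
        ((fun i => some (some i)) '' (↑(C j) : Set (Fin n)))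
      omega
    calc numSubLeaves (StarG (Option (Fin n))) s
        ≤ (insert (some none) ((fun i => some (some i)) '' (↑(C j) : Set (Fin n)))).ncard :=
          Set.ncard_le_ncard hsub (Set.toFinite _)
      _ ≤ k + 1 := hcard

end Test8

/-- For every clique tree `T` of `G_I`, every subtree of the tree model defined by `T`
has at most `k + 1` leaves; consequently, the vertex leafage of `G_I` is at most
`k + 1`. -/
theorem stmt5 (k n m : ℕ) (hk : 3 ≤ k) (hn : k ≤ n) (hm : 1 ≤ m)
    (C : Fin m → Finset (Fin n)) (hC : ∀ j, (C j).card = k) :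
    (∀ (CT : CliqueTree (GI n m C)) (u : GV n m),
        numSubLeaves CT.T (cliqueSub (GI n m C) u) ≤ k + 1) ∧
    vleafage (GI n m C) ≤ k + 1 := by
  constructor
  · intro CT u
    exact part1 hk hC CT u
  · exact Nat.sInf_le ⟨starModel n m C, starModel_leaves hk hC⟩
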